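/- Let A be a symmetric real 3×3 matrix and p = (p₁,p₂,p₃) ∈ ℝ³. Let S(p) be the antisymmetric matrix with rows (0, −p₃, p₂), (p₃, 0, −p₁), (−p₂, p₁, 0), and set B := A·S(p). Let ε be the determinant of the 4×4 bordered matrix whose upper-left 3×3 block is A, whose last column is (p₁,p₂,p₃,0)ᵀ and whose last row is (p₁,p₂,p₃,0). Then tr B = 0, det B = 0, and B³ = ε·B. -/

import Mathlib

set_option maxHeartbeats 1000000 in
private lemma eps_eval (a b c d e f p₁ p₂ p₃ : ℝ) :
    Matrix.det !![a, b, c, p₁; b, d, e, p₂; c, e, f, p₃; p₁, p₂, p₃, 0] =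
      -(p₁^2*(d*f - e^2) + p₂^2*(a*f - c^2) + p₃^2*(a*d - b^2)
        + 2*p₁*p₂*(c*e - b*f) + 2*p₁*p₃*(b*e - c*d) + 2*p₂*p₃*(b*c - a*e)) := by
  rw [show (0:ℝ) = ((0:ℕ):ℝ) by norm_num, Matrix.det_succ_row_zero]
  simp [Fin.sum_univ_succ, Matrix.det_fin_three, Matrix.submatrix_apply, Fin.succAbove,
    show ((2:Fin 3).castSucc : Fin 4) = 2 from rfl,
    show ((1:Fin 3).castSucc : Fin 4) = 1 from rfl,
    show ((0:Fin 3).castSucc : Fin 4) = 0 from rfl]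
  ring

set_option maxHeartbeats 2000000 in
/-- For a symmetric `3×3` matrix `A` and `p ∈ ℝ³`, the matrix
`B = A · S(p)` (with `S(p)` the antisymmetric matrix of `p`) satisfies
`tr B = 0`, `det B = 0` and `B³ = ε • B`, where `ε` is the bordered
determinant of `(A, p)`. -/
theorem stmt_13 (A : Matrix (Fin 3) (Fin 3) ℝ) (hA : A.IsSymm)
    (p₁ p₂ p₃ : ℝ) :
    let S : Matrix (Fin 3) (Fin 3) ℝ := !![0, -p₃, p₂; p₃, 0, -p₁; -p₂, p₁, 0]
    let B : Matrix (Fin 3) (Fin 3) ℝ := A * S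
    let ε : ℝ := Matrix.det
      !![A 0 0, A 0 1, A 0 2, p₁;
         A 1 0, A 1 1, A 1 2, p₂;
         A 2 0, A 2 1, A 2 2, p₃;
         p₁,    p₂,    p₃,    0]
    B.trace = 0 ∧ B.det = 0 ∧ B ^ 3 = ε • B := by
  intro S B ε
  have h10 : A 1 0 = A 0 1 := by
    have := congrFun (congrFun hA 0) 1; simpa [Matrix.transpose_apply] using this
  have h20 : A 2 0 = A 0 2 := by
    have := congrFun (congrFun hA 0) 2; simpa [Matrix.transpose_apply] using this
  have h21 : A 2 1 = A 1 2 := by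
    have := congrFun (congrFun hA 1) 2; simpa [Matrix.transpose_apply] using this
  have hB : B = !![A 0 1 * p₃ - A 0 2 * p₂, A 0 2 * p₁ - A 0 0 * p₃, A 0 0 * p₂ - A 0 1 * p₁;
                   A 1 1 * p₃ - A 1 2 * p₂, A 1 2 * p₁ - A 0 1 * p₃, A 0 1 * p₂ - A 1 1 * p₁;
                   A 1 2 * p₃ - A 2 2 * p₂, A 2 2 * p₁ - A 0 2 * p₃, A 0 2 * p₂ - A 1 2 * p₁] := by
    show A * S = _
    ext i j
    fin_cases i <;> fin_cases j <;>
      · simp [S, Matrix.mul_apply, Fin.sum_univ_three, h10, h20, h21]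
        ring
  have hε : ε = -(p₁^2*(A 1 1*A 2 2 - (A 1 2)^2) + p₂^2*(A 0 0*A 2 2 - (A 0 2)^2)
        + p₃^2*(A 0 0*A 1 1 - (A 0 1)^2)
        + 2*p₁*p₂*(A 0 2*A 1 2 - A 0 1*A 2 2) + 2*p₁*p₃*(A 0 1*A 1 2 - A 0 2*A 1 1)
        + 2*p₂*p₃*(A 0 1*A 0 2 - A 0 0*A 1 2)) := by
    show Matrix.det _ = _
    rw [h10, h20, h21, eps_eval]
  refine ⟨?_, ?_, ?_⟩
  · rw [hB, Matrix.trace_fin_three]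
    simp
  · rw [hB, Matrix.det_fin_three]
    simp
    ring
  · rw [hB, hε, pow_succ, pow_two]
    ext i j
    fin_cases i <;> fin_cases j <;>
      · simp [Matrix.mul_apply, Fin.sum_univ_three, Matrix.smul_apply]
        ring
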